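/- arXiv:2205.06103 — 2 statements merged into one kernel-verified Lean document; each statement's English description precedes it below -/
import Mathlib

section
/- For the Gamma distribution with shape 2 and scale 2 (Laplace transform Ψ(s) = (1+2s)^{−2}), one has (1/s)·(1 − Ψ(s))/(1 + Ψ(s)) = (2 + 2s)/(1 + 2s + 2s²) for all s > 0, and this equals the Laplace transform of t ↦ √2 · sin((2t+π)/4) · e^{−t/2}. -/
open MeasureTheory Set Real Filter

/-- for the Gamma distribution with shape 2 and scale 2
(Laplace transform `Ψ(s) = (1+2s)⁻²`), one has
`(1/s)(1 − Ψ(s))/(1 + Ψ(s)) = (2+2s)/(1+2s+2s²)` for all `s > 0`, and this is the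
Laplace transform of `t ↦ √2 sin((2t+π)/4) e^{−t/2}`. -/
theorem stmt_12 :
    ∀ s : ℝ, 0 < s →
      (1 / s) * (1 - ((1 + 2 * s) ^ 2)⁻¹) / (1 + ((1 + 2 * s) ^ 2)⁻¹) =
        (2 + 2 * s) / (1 + 2 * s + 2 * s ^ 2) ∧
      (∫ t in Ioi (0:ℝ),
          Real.exp (-s * t) *
            (Real.sqrt 2 * Real.sin ((2 * t + π) / 4) * Real.exp (-t / 2))) =
        (2 + 2 * s) / (1 + 2 * s + 2 * s ^ 2) := by
  intro s hs
  have h1 : (1 + 2 * s) ^ 2 ≠ 0 := by positivity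
  have h2 : (1:ℝ) + 2 * s + 2 * s ^ 2 ≠ 0 := by positivity
  constructor
  · rw [div_eq_div_iff (by positivity) h2]
    field_simp
    ring
  · set a : ℝ := s + 1/2 with ha
    have hapos : 0 < a := by positivity
    have hD : a ^ 2 + 1/4 ≠ 0 := by positivity
    set A : ℝ := (1/2 - a) / (a^2 + 1/4) with hA
    set B : ℝ := -(a + 1/2) / (a^2 + 1/4) with hB
    set F : ℝ → ℝ := fun t => Real.exp (-a * t) * (A * Real.sin (t/2) + B * Real.cos (t/2))
      with hF
    set f' : ℝ → ℝ := fun t =>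
      Real.exp (-s * t) * (Real.sqrt 2 * Real.sin ((2 * t + π) / 4) * Real.exp (-t / 2))
      with hf'
    have hsq : Real.sqrt 2 * Real.sqrt 2 = 2 := Real.mul_self_sqrt (by norm_num)
    have key : ∀ t : ℝ, Real.sqrt 2 * Real.sin ((2 * t + π) / 4)
        = Real.sin (t/2) + Real.cos (t/2) := by
      intro t
      have h4 : (2 * t + π) / 4 = t/2 + π/4 := by ring
      rw [h4, Real.sin_add, Real.cos_pi_div_four, Real.sin_pi_div_four]
      linear_combination (Real.sin (t/2) + Real.cos (t/2)) / 2 * hsq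
    have hexp : ∀ t : ℝ, Real.exp (-s * t) * Real.exp (-t / 2) = Real.exp (-a * t) := by
      intro t
      rw [← Real.exp_add]
      congr 1
      rw [ha]; ring
    have hfval : ∀ t : ℝ, f' t
        = Real.exp (-a * t) * (Real.sin (t/2) + Real.cos (t/2)) := by
      intro t
      rw [hf']
      simp only
      rw [← key t, ← hexp t]
      ring
    have hAval : -a * A - B * (1/2) = 1 := by
      rw [hA, hB]; field_simp; ring
    have hBval : A * (1/2) - a * B = 1 := by
      rw [hA, hB]; field_simp; ring
    have hderiv : ∀ t : ℝ, HasDerivAt F (f' t) t := by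
      intro t
      have hs1 : HasDerivAt (fun t : ℝ => Real.exp (-a * t)) (-a * Real.exp (-a * t)) t := by
        have := (HasDerivAt.const_mul (-a) (hasDerivAt_id t)).exp
        simpa [mul_comm] using this
      have hdiv : HasDerivAt (fun t : ℝ => t / 2) (1/2) t := by
        simpa using (hasDerivAt_id t).div_const 2
      have hs2 : HasDerivAt (fun t : ℝ => A * Real.sin (t/2) + B * Real.cos (t/2))
          (A * (Real.cos (t/2) * (1/2)) + B * (-Real.sin (t/2) * (1/2))) t :=
        ((hdiv.sin).const_mul A).add ((hdiv.cos).const_mul B)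
      have hmul : HasDerivAt F _ t := hs1.mul hs2
      convert hmul using 1
      rw [hfval t, hA, hB]
      field_simp
      ring
    have hint : IntegrableOn f' (Ioi (0:ℝ)) := by
      have hbase : IntegrableOn (fun t : ℝ => 2 * Real.exp (-a * t)) (Ioi 0) :=
        (exp_neg_integrableOn_Ioi 0 hapos).const_mul _
      refine hbase.mono' ?_ ?_
      · apply Continuous.aestronglyMeasurable
        rw [hf']
        fun_prop
      · filter_upwards with t
        rw [hfval t]
        rw [Real.norm_eq_abs, abs_mul, Real.abs_exp, mul_comm (2:ℝ)]
        gcongr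
        calc |Real.sin (t/2) + Real.cos (t/2)| ≤ |Real.sin (t/2)| + |Real.cos (t/2)| :=
              abs_add_le _ _
          _ ≤ 1 + 1 := add_le_add (Real.abs_sin_le_one _) (Real.abs_cos_le_one _)
          _ = 2 := by norm_num
    have htend : Tendsto F atTop (nhds 0) := by
      refine squeeze_zero_norm (a := fun t => (|A| + |B|) * Real.exp (-a * t)) ?_ ?_
      · intro t
        rw [hF]
        simp only [norm_mul, Real.norm_eq_abs, Real.abs_exp]
        rw [mul_comm]
        gcongr
        calc |A * Real.sin (t/2) + B * Real.cos (t/2)|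
            ≤ |A * Real.sin (t/2)| + |B * Real.cos (t/2)| := abs_add_le _ _
          _ ≤ |A| * 1 + |B| * 1 := by
              rw [abs_mul, abs_mul]
              gcongr
              exacts [Real.abs_sin_le_one _, Real.abs_cos_le_one _]
          _ = |A| + |B| := by ring
      · rw [show (0:ℝ) = (|A| + |B|) * 0 by ring]
        apply Tendsto.const_mul
        apply Real.tendsto_exp_atBot.comp
        exact Tendsto.const_mul_atTop_of_neg (by linarith : -a < 0) tendsto_id
    have hFTC := integral_Ioi_of_hasDerivAt_of_tendsto' (a := 0) (f := F) (f' := f')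
      (fun x _ => hderiv x) hint htend
    rw [hf'] at hFTC
    rw [hFTC, hF]
    simp only [mul_zero, zero_div, Real.sin_zero, Real.cos_zero, Real.exp_zero,
      neg_mul, neg_zero, zero_mul]
    rw [hB, ha]
    field_simp
    ring
end

section
/- The function E(t) = √2 · sin((2t+π)/4) · e^{−t/2} is not monotone nonincreasing on (0,∞): there exist 0 < t₁ < t₂ with E(t₁) < E(t₂), and moreover E takes negative values on (0,∞). -/
open Real

/-- The expected value function of the switch process with Γ(2,2) switching times. -/
noncomputable def Efun (t : ℝ) : ℝ :=
  Real.sqrt 2 * Real.sin ((2 * t + π) / 4) * Real.exp (-t / 2)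

lemma Efun_neg_at : Efun (2 * π) < 0 := by
  have h1 : (2 * (2 * π) + π) / 4 = π + π / 4 := by ring
  have h2 : Real.sin (π + π / 4) = -Real.sin (π / 4) := by
    rw [Real.sin_add, Real.sin_pi, Real.cos_pi]; ring
  have h3 : Real.sin (π / 4) > 0 := Real.sin_pos_of_pos_of_lt_pi (by positivity)
    (by linarith [pi_pos])
  unfold Efun
  rw [h1, h2]
  have h4 : Real.sqrt 2 > 0 := by positivity
  have h5 : Real.exp (-(2 * π) / 2) > 0 := Real.exp_pos _
  nlinarith [mul_pos (mul_pos h4 h3) h5]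

lemma Efun_pos_at : 0 < Efun (9 * π / 2) := by
  have h1 : (2 * (9 * π / 2) + π) / 4 = 2 * π + π / 2 := by ring
  have h2 : Real.sin (2 * π + π / 2) = 1 := by
    rw [Real.sin_add, Real.sin_two_pi, Real.cos_two_pi, Real.sin_pi_div_two]; ring
  unfold Efun
  rw [h1, h2]
  positivity

/-- `E(t) = √2 sin((2t+π)/4) e^{−t/2}` is not monotone nonincreasing on
`(0,∞)`: there are `0 < t₁ < t₂` with `E(t₁) < E(t₂)`, and `E` takes negative values
on `(0,∞)`. -/
theorem stmt_13 :
    (∃ t₁ t₂ : ℝ, 0 < t₁ ∧ t₁ < t₂ ∧ Efun t₁ < Efun t₂) ∧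
    (∃ t : ℝ, 0 < t ∧ Efun t < 0) := by
  have hp := pi_pos
  refine ⟨⟨2 * π, 9 * π / 2, by linarith, by linarith, ?_⟩, ⟨2 * π, by linarith, Efun_neg_at⟩⟩
  exact Efun_neg_at.trans Efun_pos_at
end
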